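/- For all integers $n \geq 0$ and $j$: $\sum_{k=0}^{\lfloor j/2 \rfloor} q^{\binom{j-2k}{2}} (-q;q)_{j-2k} \binom{n-k}{j-2k}_{q^2} \binom{n}{k}_{q^2} = \binom{2n}{j}_q$, a polynomial identity in $q$. -/

import Mathlib

/- Identity (8.5) of Berkovich–Warnaar:
`∑_{k=0}^{⌊j/2⌋} q^{C(j-2k,2)} (-q;q)_{j-2k} [n-k, j-2k]_{q²} [n,k]_{q²} = [2n, j]_q`,
a polynomial identity in q, stated in `RatFunc ℚ` with `q = RatFunc.X`. -/

open Finset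

noncomputable section

def qPoch {F : Type*} [Field F] (a x : F) (n : ℕ) : F :=
  ∏ i ∈ Finset.range n, (1 - a * x ^ i)

def qBinom {F : Type*} [Field F] (x : F) (n k : ℤ) : F :=
  if 0 ≤ k ∧ k ≤ n then
    qPoch x x n.toNat / (qPoch x x k.toNat * qPoch x x (n - k).toNat)
  else 0

def q : RatFunc ℚ := RatFunc.X

set_option maxHeartbeats 2000000


lemma q_pow_ne_one {i : ℕ} (hi : i ≠ 0) : (q ^ i : RatFunc ℚ) ≠ 1 := by
  intro h
  have h2 : algebraMap (Polynomial ℚ) (RatFunc ℚ) (Polynomial.X ^ i)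
      = algebraMap (Polynomial ℚ) (RatFunc ℚ) 1 := by
    simpa [RatFunc.algebraMap_X, q] using h
  have h3 := RatFunc.algebraMap_injective ℚ h2
  have := congrArg Polynomial.natDegree h3
  simp [Polynomial.natDegree_X_pow] at this
  exact hi this

lemma one_sub_q_pow_ne_zero {i : ℕ} (hi : i ≠ 0) : (1 : RatFunc ℚ) - q ^ i ≠ 0 :=
  fun h => q_pow_ne_one hi (by linear_combination -h)

lemma qPoch_succ {F : Type*} [Field F] (a x : F) (m : ℕ) :
    qPoch a x (m + 1) = qPoch a x m * (1 - a * x ^ m) := Finset.prod_range_succ _ _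

lemma qPoch_zero {F : Type*} [Field F] (a x : F) : qPoch a x 0 = 1 := Finset.prod_range_zero _

lemma P2_ne_zero (m : ℕ) : qPoch (q^2) (q^2) m ≠ 0 := by
  unfold qPoch
  apply Finset.prod_ne_zero_iff.mpr
  intro i _
  have e : (q^2 : RatFunc ℚ) * (q^2)^i = q^(2*i+2) := by ring
  rw [e]
  exact one_sub_q_pow_ne_zero (by omega)

lemma Pq_ne_zero (m : ℕ) : qPoch q q m ≠ 0 := by
  unfold qPoch
  apply Finset.prod_ne_zero_iff.mpr
  intro i _
  have e : (q : RatFunc ℚ) * q^i = q^(i+1) := by ring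
  rw [e]
  exact one_sub_q_pow_ne_zero (by omega)

lemma aux_ne (a : ℕ) : (1 : RatFunc ℚ) - q^2 * (q^2)^a ≠ 0 := by
  have e : (q^2 : RatFunc ℚ) * (q^2)^a = q^(2*a+2) := by ring
  rw [e]
  exact one_sub_q_pow_ne_zero (by omega)

lemma qBinom_out {F : Type*} [Field F] {x : F} {n k : ℤ} (h : ¬(0 ≤ k ∧ k ≤ n)) :
    qBinom x n k = 0 := if_neg h

lemma qBinom_nat {F : Type*} [Field F] (x : F) (N r : ℕ) (h : r ≤ N) :
    qBinom x (N : ℤ) (r : ℤ) = qPoch x x N / (qPoch x x r * qPoch x x (N - r)) := by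
  unfold qBinom
  rw [if_pos ⟨Int.ofNat_nonneg r, by exact_mod_cast h⟩]
  have e : ((N : ℤ) - r).toNat = N - r := by omega
  rw [Int.toNat_natCast, Int.toNat_natCast, e]

lemma choose2_succ (a : ℕ) : (a+1).choose 2 = a.choose 2 + a := by
  rw [Nat.choose_succ_succ a 1]
  simp [Nat.choose_one_right]; omega

def Fm (n j k : ℕ) : RatFunc ℚ :=
  q ^ ((j - 2 * k).choose 2) * qPoch (-q) q (j - 2 * k) *
    qBinom (q ^ 2) ((n : ℤ) - k) ((j : ℤ) - 2 * k) * qBinom (q ^ 2) (n : ℤ) (k : ℤ)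

lemma Fm_zero_lt {n j k : ℕ} (h : j < 2 * k) : Fm n j k = 0 := by
  unfold Fm
  rw [qBinom_out (x := (q:RatFunc ℚ)^2) (n := (n:ℤ)-k) (k := (j:ℤ)-2*k) (by push_cast; omega)]
  ring

lemma Fm_zero_nk {n j k : ℕ} (h : n < k) : Fm n j k = 0 := by
  unfold Fm
  rw [qBinom_out (x := (q:RatFunc ℚ)^2) (n := (n:ℤ)) (k := (k:ℤ)) (by push_cast; omega)]
  ring

lemma key (n j k : ℕ) (h1 : 1 ≤ j) (h2 : j ≤ 2*n+1) :
    (1 - q^j) * Fm n j k - (1 - q^(2*n+1-j)) * Fm n (j-1) k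
    = (q^j - q^(j - 2*(k+1))) * Fm n j (k+1) - (q^j - q^(j - 2*k)) * Fm n j k := by
  rcases lt_or_ge j (2*k) with hc | hc
  · -- C1 : j < 2k, everything vanishes
    rw [Fm_zero_lt hc, Fm_zero_lt (show j - 1 < 2*k by omega),
      Fm_zero_lt (show j < 2*(k+1) by omega)]
    ring
  rcases eq_or_lt_of_le hc with hc2 | hc2
  · -- C2 : j = 2k
    rw [Fm_zero_lt (show j - 1 < 2*k by omega), Fm_zero_lt (show j < 2*(k+1) by omega),
      show j - 2*k = 0 by omega, show j - 2*(k+1) = 0 by omega]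
    ring
  rcases eq_or_lt_of_le (show 2*k+1 ≤ j by omega) with hc3 | hc3
  · -- C3 : j = 2k+1
    subst hc3
    rw [Fm_zero_lt (show 2*k+1 < 2*(k+1) by omega)]
    rw [show 2*k+1 - 2*k = 1 by omega, show 2*k+1 - 2*(k+1) = 0 by omega,
      show 2*k+1-1 = 2*k by omega]
    rcases lt_or_ge n k with hk | hk
    · rw [Fm_zero_nk hk, Fm_zero_nk hk]; ring
    rcases eq_or_lt_of_le hk with hk2 | hk2
    · -- k = n
      subst hk2
      unfold Fm
      rw [qBinom_out (x := (q:RatFunc ℚ)^2) (n := (k:ℤ)-k) (k := ((2*k+1:ℕ):ℤ)-2*k)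
        (by push_cast; omega)]
      rw [show 2*k+1-(2*k+1) = 0 by omega, show 2*k+1 - 2*k = 1 by omega,
        show 2*k - 2*k = 0 by omega]
      ring
    · -- k < n : n = k + e + 1
      obtain ⟨e, rfl⟩ : ∃ e, n = k + e + 1 := ⟨n - k - 1, by omega⟩
      unfold Fm
      rw [show 2*k+1 - 2*k = 1 by omega, show 2*k - 2*k = 0 by omega,
        show 2*(k+e+1)+1-(2*k+1) = 2*(e+1) by omega]
      rw [show ((k + e + 1 : ℕ) : ℤ) - (k:ℕ) = ((e+1 : ℕ) : ℤ) by push_cast; ring,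
        show (((2*k+1 : ℕ)):ℤ) - 2*(k:ℕ) = ((1:ℕ) : ℤ) by push_cast; ring,
        show (((2*k : ℕ)):ℤ) - 2*(k:ℕ) = ((0:ℕ) : ℤ) by push_cast; ring]
      rw [qBinom_nat _ (e+1) 1 (by omega), qBinom_nat _ (e+1) 0 (by omega)]
      rw [show e + 1 - 1 = e by omega, show e + 1 - 0 = e + 1 by omega]
      have n1 := P2_ne_zero e
      have n2 := P2_ne_zero (e+1)
      have n3 := P2_ne_zero 1
      have n4 := P2_ne_zero 0
      field_simp
      rw [qPoch_succ (-q) q 0, qPoch_succ (q^2) (q^2) e, qPoch_succ (q^2) (q^2) 0]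
      simp only [qPoch_zero, show (1:ℕ).choose 2 = 0 from rfl, show (0:ℕ).choose 2 = 0 from rfl]
      ring
  · -- C4 : j ≥ 2k+2
    obtain ⟨a, rfl⟩ : ∃ a, j = 2*k + a + 2 := ⟨j - 2*k - 2, by omega⟩
    rw [show 2*k+a+2-1 = 2*k+a+1 by omega, show 2*k+a+2 - 2*k = a+2 by omega,
      show 2*k+a+2 - 2*(k+1) = a by omega]
    rcases lt_or_ge n k with hk | hk
    · rw [Fm_zero_nk hk, Fm_zero_nk hk, Fm_zero_nk (show n < k+1 by omega)]; ring
    rcases lt_or_ge (n + k + 1) (2*k+a+2) with hb | hb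
    · -- C4b : j > n+k+1 : all binomials out of range
      unfold Fm
      rw [qBinom_out (x := (q:RatFunc ℚ)^2) (n := (n:ℤ)-k) (k := ((2*k+a+2:ℕ):ℤ)-2*k)
        (by push_cast; omega),
        qBinom_out (x := (q:RatFunc ℚ)^2) (n := (n:ℤ)-k) (k := ((2*k+a+1:ℕ):ℤ)-2*k)
        (by push_cast; omega),
        qBinom_out (x := (q:RatFunc ℚ)^2) (n := (n:ℤ)-((k+1:ℕ):ℤ)) (k := ((2*k+a+2:ℕ):ℤ)-2*((k+1:ℕ):ℤ))
        (by push_cast; omega)]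
      ring
    rcases eq_or_lt_of_le hb with hb2 | hb2
    · -- C4c : j = n+k+1, i.e. n = k + a + 1
      obtain rfl : n = k + a + 1 := by omega
      unfold Fm
      rw [show 2*k+a+2 - 2*k = a+2 by omega, show 2*k+a+1 - 2*k = a+1 by omega,
        show 2*k+a+2 - 2*(k+1) = a by omega,
        show 2*(k+a+1)+1-(2*k+a+2) = a+1 by omega]
      rw [qBinom_out (x := (q:RatFunc ℚ)^2) (n := ((k+a+1:ℕ):ℤ)-k) (k := ((2*k+a+2:ℕ):ℤ)-2*k)
        (by push_cast; omega)]
      rw [show ((k+a+1 : ℕ) : ℤ) - (k:ℕ) = ((a+1 : ℕ) : ℤ) by push_cast; ring,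
        show ((k+a+1 : ℕ) : ℤ) - ((k+1:ℕ):ℤ) = ((a : ℕ) : ℤ) by push_cast; ring,
        show (((2*k+a+1 : ℕ)):ℤ) - 2*(k:ℕ) = ((a+1:ℕ) : ℤ) by push_cast; ring,
        show (((2*k+a+2 : ℕ)):ℤ) - 2*((k+1:ℕ):ℤ) = ((a:ℕ) : ℤ) by push_cast; ring]
      rw [qBinom_nat _ (a+1) (a+1) (by omega), qBinom_nat _ a a (by omega),
        qBinom_nat _ (k+a+1) k (by omega), qBinom_nat _ (k+a+1) (k+1) (by omega)]
      rw [show a+1-(a+1) = 0 by omega, show a - a = 0 by omega,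
        show k+a+1-k = a+1 by omega, show k+a+1-(k+1) = a by omega]
      have n1 := P2_ne_zero a
      have n2 := P2_ne_zero (a+1)
      have n3 := P2_ne_zero k
      have n4 := P2_ne_zero (k+1)
      have n5 := P2_ne_zero (k+a+1)
      have n6 := P2_ne_zero 0
      field_simp
      rw [choose2_succ a, qPoch_succ (-q) q a,
        qPoch_succ (q^2) (q^2) a, qPoch_succ (q^2) (q^2) k]
      simp only [qPoch_zero]
      ring
    · -- C4d : generic, n ≥ k + a + 2
      obtain ⟨d, rfl⟩ : ∃ d, n = k + a + 2 + d := ⟨n - k - a - 2, by omega⟩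
      unfold Fm
      rw [show 2*k+a+2 - 2*k = a+2 by omega, show 2*k+a+1 - 2*k = a+1 by omega,
        show 2*k+a+2 - 2*(k+1) = a by omega,
        show 2*(k+a+2+d)+1-(2*k+a+2) = a+2*d+3 by omega]
      rw [show ((k+a+2+d : ℕ) : ℤ) - (k:ℕ) = ((a+d+2 : ℕ) : ℤ) by push_cast; ring,
        show ((k+a+2+d : ℕ) : ℤ) - ((k+1:ℕ):ℤ) = ((a+d+1 : ℕ) : ℤ) by push_cast; ring,
        show (((2*k+a+2 : ℕ)):ℤ) - 2*(k:ℕ) = ((a+2:ℕ) : ℤ) by push_cast; ring,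
        show (((2*k+a+1 : ℕ)):ℤ) - 2*(k:ℕ) = ((a+1:ℕ) : ℤ) by push_cast; ring,
        show (((2*k+a+2 : ℕ)):ℤ) - 2*((k+1:ℕ):ℤ) = ((a:ℕ) : ℤ) by push_cast; ring]
      rw [qBinom_nat _ (a+d+2) (a+2) (by omega), qBinom_nat _ (a+d+2) (a+1) (by omega),
        qBinom_nat _ (a+d+1) a (by omega),
        qBinom_nat _ (k+a+2+d) k (by omega), qBinom_nat _ (k+a+2+d) (k+1) (by omega)]
      rw [show a+d+2-(a+2) = d by omega, show a+d+2-(a+1) = d+1 by omega,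
        show a+d+1-a = d+1 by omega,
        show k+a+2+d-k = a+d+2 by omega, show k+a+2+d-(k+1) = a+d+1 by omega]
      have n1 := P2_ne_zero a
      have n2 := P2_ne_zero (a+1)
      have n3 := P2_ne_zero (a+2)
      have n4 := P2_ne_zero d
      have n5 := P2_ne_zero (d+1)
      have n6 := P2_ne_zero k
      have n7 := P2_ne_zero (k+1)
      have n8 := P2_ne_zero (a+d+1)
      have n9 := P2_ne_zero (a+d+2)
      have n10 := P2_ne_zero (k+a+2+d)
      field_simp
      rw [show a+2 = (a+1)+1 by omega, choose2_succ (a+1), choose2_succ a,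
        qPoch_succ (-q) q (a+1), qPoch_succ (-q) q a,
        qPoch_succ (q^2) (q^2) (a+1), qPoch_succ (q^2) (q^2) a,
        qPoch_succ (q^2) (q^2) d,
        qPoch_succ (q^2) (q^2) k]
      ring

lemma qBinom_zero {F : Type*} [Field F] (x : F) (N : ℤ) (h0 : 0 ≤ N)
    (h : qPoch x x N.toNat ≠ 0) : qBinom x N 0 = 1 := by
  unfold qBinom
  rw [if_pos ⟨le_refl 0, h0⟩, sub_zero]
  simp only [Int.toNat_zero, qPoch_zero, one_mul]
  exact div_self h

lemma Fm_zero_big {n j k : ℕ} (h : 2*n+2 ≤ j) : Fm n j k = 0 := by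
  rcases lt_or_ge n k with hk | hk
  · exact Fm_zero_nk hk
  · unfold Fm
    rw [qBinom_out (x := (q:RatFunc ℚ)^2) (n := (n:ℤ)-k) (k := (j:ℤ)-2*k)
      (by push_cast; omega)]
    ring

lemma sum_rec (n j : ℕ) (h1 : 1 ≤ j) (h2 : j ≤ 2*n+1) :
    (1 - q^j) * ∑ k ∈ Finset.range (j/2+1), Fm n j k
      = (1 - q^(2*n+1-j)) * ∑ k ∈ Finset.range ((j-1)/2+1), Fm n (j-1) k := by
  have tele : ∑ k ∈ Finset.range (j/2+1),
      ((q^j - q^(j-2*(k+1))) * Fm n j (k+1) - (q^j - q^(j-2*k)) * Fm n j k)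
      = (q^j - q^(j-2*(j/2+1))) * Fm n j (j/2+1) - (q^j - q^(j-2*0)) * Fm n j 0 :=
    Finset.sum_range_sub (fun k => (q^j - q^(j-2*k)) * Fm n j k) (j/2+1)
  rw [Fm_zero_lt (show j < 2*(j/2+1) by omega), show j - 2*0 = j by omega] at tele
  have hsum : ∑ k ∈ Finset.range (j/2+1),
      ((1 - q^j) * Fm n j k - (1 - q^(2*n+1-j)) * Fm n (j-1) k)
      = ∑ k ∈ Finset.range (j/2+1),
        ((q^j - q^(j-2*(k+1))) * Fm n j (k+1) - (q^j - q^(j-2*k)) * Fm n j k) :=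
    Finset.sum_congr rfl (fun k _ => key n j k h1 h2)
  rw [tele, Finset.sum_sub_distrib, ← Finset.mul_sum, ← Finset.mul_sum] at hsum
  have h0 : (∑ k ∈ Finset.range (j/2+1), Fm n (j-1) k)
      = ∑ k ∈ Finset.range ((j-1)/2+1), Fm n (j-1) k := by
    rcases Nat.even_or_odd j with he | ho
    · obtain ⟨t, rfl⟩ := he
      rw [show (t+t)/2+1 = (((t+t-1)/2+1)) + 1 by omega, Finset.sum_range_succ,
        Fm_zero_lt (show t+t-1 < 2*((t+t-1)/2+1) by omega), add_zero]
    · obtain ⟨t, rfl⟩ := ho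
      rw [show (2*t+1)/2+1 = (2*t+1-1)/2+1 by omega]
  rw [h0] at hsum
  linear_combination hsum

lemma rhs_rec (n j : ℕ) (h1 : 1 ≤ j) (h2 : j ≤ 2*n+1) :
    (1 - q^j) * qBinom q ((2*n : ℕ) : ℤ) ((j : ℕ) : ℤ)
      = (1 - q^(2*n+1-j)) * qBinom q ((2*n : ℕ) : ℤ) (((j-1 : ℕ)) : ℤ) := by
  rcases eq_or_lt_of_le h2 with he | hl
  · rw [qBinom_out (x := (q : RatFunc ℚ)) (n := ((2*n:ℕ):ℤ)) (k := ((j:ℕ):ℤ))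
      (by push_cast; omega), show 2*n+1-j = 0 by omega]
    simp
  · obtain ⟨t, rfl⟩ : ∃ t, j = t+1 := ⟨j-1, by omega⟩
    obtain ⟨s, hs⟩ : ∃ s, 2*n = t+1+s := ⟨2*n - t - 1, by omega⟩
    rw [hs, show t+1-1 = t by omega, show (t+1+s)+1-(t+1) = s+1 by omega]
    rw [qBinom_nat q (t+1+s) (t+1) (by omega), qBinom_nat q (t+1+s) t (by omega)]
    rw [show t+1+s-(t+1) = s by omega, show t+1+s-t = s+1 by omega]
    have n1 := Pq_ne_zero t
    have n2 := Pq_ne_zero (t+1)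
    have n3 := Pq_ne_zero s
    have n4 := Pq_ne_zero (s+1)
    have n5 := Pq_ne_zero (t+1+s)
    field_simp
    rw [qPoch_succ q q t, qPoch_succ q q s]
    ring

lemma main_id (n j : ℕ) :
    ∑ k ∈ Finset.range (j/2+1), Fm n j k = qBinom q ((2*n : ℕ) : ℤ) ((j : ℕ) : ℤ) := by
  induction j with
  | zero =>
    rw [Finset.sum_range_one]
    unfold Fm
    simp only [Nat.mul_zero, Nat.sub_zero, Nat.cast_zero, sub_zero, mul_zero,
      Nat.choose_zero_right]
    rw [show (0:ℕ).choose 2 = 0 from rfl, qPoch_zero]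
    rw [qBinom_zero (q^2) (n:ℤ) (by positivity) (by simpa using P2_ne_zero n),
      qBinom_zero q ((2*n:ℕ):ℤ) (by positivity) (by rw [Int.toNat_natCast]; exact Pq_ne_zero (2*n))]
    ring
  | succ t ih =>
    rcases lt_or_ge (2*n+1) (t+1) with hbig | hle
    · rw [Finset.sum_eq_zero (fun k _ => Fm_zero_big (by omega)),
        qBinom_out (x := (q : RatFunc ℚ)) (n := ((2*n:ℕ):ℤ)) (k := (((t+1:ℕ)):ℤ))
          (by push_cast; omega)]
    · have h := sum_rec n (t+1) (by omega) hle
      have h2 := rhs_rec n (t+1) (by omega) hle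
      rw [show t+1-1 = t by omega] at h h2
      rw [ih] at h
      exact mul_left_cancel₀ (one_sub_q_pow_ne_zero (by omega)) (h.trans h2.symm)

theorem stmt18 (n j : ℕ) :
    ∑ k ∈ Finset.range (j / 2 + 1),
      q ^ ((j - 2 * k).choose 2) * qPoch (-q) q (j - 2 * k) *
        qBinom (q ^ 2) ((n : ℤ) - k) ((j : ℤ) - 2 * k) *
        qBinom (q ^ 2) (n : ℤ) (k : ℤ)
    = qBinom q (2 * n : ℤ) (j : ℤ) := by
  have h := main_id n j
  rw [show (((2*n : ℕ)) : ℤ) = (2 * n : ℤ) by push_cast; ring] at h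
  exact h

end
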